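/- Let 0 < α̃ < 1, η ≥ 0, and let λ ∈ ℂ with λ ∉ (−∞, −η]. Then ∫_{−∞}^{+∞} |ξ|^{2α̃−1} / (λ + η + ξ²) dξ = (π / sin(α̃ π)) · (λ + η)^{α̃−1}, where (λ+η)^{α̃−1} denotes the principal branch of the complex power. -/

import Mathlib

open MeasureTheory Complex Set

namespace Stmt2Aux


lemma beta_real {a : ℝ} (h0 : 0 < a) (h1 : a < 1) :
    ∫ x in Ioo (0:ℝ) 1, x ^ (a-1) * (1-x) ^ (-a) = Real.pi / Real.sin (Real.pi * a) := by
  have key := Complex.Gamma_mul_Gamma_eq_betaIntegral (s := (a:ℂ)) (t := 1 - (a:ℂ))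
    (by simpa using h0) (by simpa using h1)
  rw [add_sub_cancel, Complex.Gamma_one, one_mul] at key
  rw [Complex.Gamma_mul_Gamma_one_sub] at key
  have hbeta : Complex.betaIntegral (a:ℂ) (1 - (a:ℂ))
      = ((∫ x in Ioo (0:ℝ) 1, x ^ (a-1) * (1-x) ^ (-a) : ℝ) : ℂ) := by
    rw [Complex.betaIntegral, intervalIntegral.integral_of_le zero_le_one,
      MeasureTheory.integral_Ioc_eq_integral_Ioo]
    calc ∫ t in Ioo (0:ℝ) 1, (t:ℂ) ^ ((a:ℂ) - 1) * (1 - (t:ℂ)) ^ (1 - (a:ℂ) - 1)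
        = ∫ t in Ioo (0:ℝ) 1, ((t ^ (a-1) * (1-t) ^ (-a) : ℝ) : ℂ) := by
          refine setIntegral_congr_fun measurableSet_Ioo (fun x hx => ?_)
          have hx0 : (0:ℝ) ≤ x := hx.1.le
          have hx1 : (0:ℝ) ≤ 1 - x := by linarith [hx.2]
          rw [Complex.ofReal_mul, Complex.ofReal_cpow hx0, Complex.ofReal_cpow hx1]
          push_cast
          ring_nf
      _ = _ := integral_ofReal
  rw [hbeta] at key
  have : ((Real.pi / Real.sin (Real.pi * a) : ℝ) : ℂ)
      = (∫ x in Ioo (0:ℝ) 1, x ^ (a-1) * (1-x) ^ (-a) : ℝ) := by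
    rw [← key]; push_cast [Complex.ofReal_sin]; ring_nf
  exact_mod_cast this.symm



lemma J_eval {a : ℝ} (h0 : 0 < a) (h1 : a < 1) :
    ∫ u in Ioi (0:ℝ), u ^ (a-1) / (1 + u) = Real.pi / Real.sin (Real.pi * a) := by
  have himg : (fun x : ℝ => x / (1 - x)) '' Ioo 0 1 = Ioi 0 := by
    ext u
    simp only [mem_image, mem_Ioo, mem_Ioi]
    constructor
    · rintro ⟨x, ⟨hx0, hx1⟩, rfl⟩
      exact div_pos hx0 (by linarith)
    · intro hu
      refine ⟨u / (1 + u), ⟨div_pos hu (by linarith), by rw [div_lt_one (by linarith)]; linarith⟩, ?_⟩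
      have h1u : (1:ℝ) + u ≠ 0 := by positivity
      field_simp; ring
  have hderiv : ∀ x ∈ Ioo (0:ℝ) 1, HasDerivWithinAt (fun x : ℝ => x / (1 - x))
      (((1 - x) ^ 2)⁻¹) (Ioo 0 1) x := by
    intro x hx
    have hne : (1:ℝ) - x ≠ 0 := ne_of_gt (by linarith [hx.2])
    have h := (hasDerivAt_id x).div ((hasDerivAt_id x).const_sub 1) hne
    exact (h.congr_deriv (by simp only [id]; ring)).hasDerivWithinAt
  have hinj : InjOn (fun x : ℝ => x / (1 - x)) (Ioo 0 1) := by
    intro x hx y hy h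
    have hx1 : (1:ℝ) - x ≠ 0 := ne_of_gt (by linarith [hx.2])
    have hy1 : (1:ℝ) - y ≠ 0 := ne_of_gt (by linarith [hy.2])
    simp only at h
    field_simp at h
    linarith
  rw [← himg, MeasureTheory.integral_image_eq_integral_abs_deriv_smul measurableSet_Ioo hderiv hinj,
    ← beta_real h0 h1]
  refine setIntegral_congr_fun measurableSet_Ioo (fun x hx => ?_)
  have hx0 : (0:ℝ) < x := hx.1
  have hp : (0:ℝ) < 1 - x := by linarith [hx.2]
  have h1 : (1:ℝ) + x / (1 - x) = (1 - x)⁻¹ := by field_simp; ring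
  have hq : (0:ℝ) < x ^ (a-1) := Real.rpow_pos_of_pos hx0 _
  have e1 : (x / (1 - x)) ^ (a - 1) = x ^ (a-1) / (1-x) ^ (a-1) :=
    Real.div_rpow hx0.le hp.le _
  have e2 : (1-x) ^ (a-1) = (1-x) ^ a * (1-x)⁻¹ := by
    rw [Real.rpow_sub hp, Real.rpow_one, div_eq_mul_inv]
  have e3 : (1-x) ^ (-a) = ((1-x) ^ a)⁻¹ := by
    rw [Real.rpow_neg hp.le]
  have hqa : (0:ℝ) < (1-x) ^ a := Real.rpow_pos_of_pos hp _
  simp only [smul_eq_mul, h1, e1, e2, e3]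
  rw [abs_of_pos (by positivity)]
  field_simp



lemma C1 {a : ℝ} (h0 : 0 < a) (h1 : a < 1) :
    ∫ x in Ioi (0:ℝ), x ^ (2*a-1) / (1 + x^2)
      = (1/2) * (Real.pi / Real.sin (Real.pi * a)) := by
  have himg : Real.sqrt '' Ioi 0 = Ioi 0 := by
    ext x
    simp only [mem_image, mem_Ioi]
    constructor
    · rintro ⟨u, hu, rfl⟩; exact Real.sqrt_pos.mpr hu
    · intro hx; exact ⟨x^2, by positivity, Real.sqrt_sq hx.le⟩
  have hderiv : ∀ u ∈ Ioi (0:ℝ), HasDerivWithinAt Real.sqrt (1 / (2 * Real.sqrt u)) (Ioi 0) u :=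
    fun u hu => (Real.hasDerivAt_sqrt (ne_of_gt hu)).hasDerivWithinAt
  have hinj : InjOn Real.sqrt (Ioi 0) := by
    intro u hu v hv h
    rwa [Real.sqrt_inj (le_of_lt hu) (le_of_lt hv)] at h
  have sub := MeasureTheory.integral_image_eq_integral_abs_deriv_smul measurableSet_Ioi hderiv hinj
    (fun x => x ^ (2*a-1) / (1 + x^2))
  rw [himg] at sub
  rw [sub]
  have congr : ∫ u in Ioi (0:ℝ), |1 / (2 * Real.sqrt u)| • (Real.sqrt u ^ (2*a-1) / (1 + Real.sqrt u ^ 2))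
      = ∫ u in Ioi (0:ℝ), (1/2) * (u ^ (a-1) / (1 + u)) := by
    refine setIntegral_congr_fun measurableSet_Ioi (fun u hu => ?_)
    have hu0 : (0:ℝ) < u := hu
    have hs : (0:ℝ) < Real.sqrt u := Real.sqrt_pos.mpr hu0
    have e1 : Real.sqrt u ^ (2*a-1) = u ^ (a - 1/2) := by
      rw [Real.sqrt_eq_rpow, ← Real.rpow_mul hu0.le]
      congr 1
      ring
    have e2 : Real.sqrt u ^ 2 = u := Real.sq_sqrt hu0.le
    have e3 : u ^ (a - 1/2) = u ^ (a-1) * u ^ (1/2:ℝ) := by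
      rw [← Real.rpow_add hu0]; ring_nf
    have e4 : Real.sqrt u = u ^ (1/2:ℝ) := Real.sqrt_eq_rpow u
    have hup : (0:ℝ) < u ^ (1/2:ℝ) := Real.rpow_pos_of_pos hu0 _
    rw [e1, e2, e3, e4, abs_of_pos (by positivity), smul_eq_mul]
    field_simp
  rw [congr, integral_const_mul, J_eval h0 h1]



lemma D_eval {a t : ℝ} (h0 : 0 < a) (h1 : a < 1) (ht : 0 < t) :
    ∫ ξ : ℝ, |ξ| ^ (2*a-1) / (t + ξ^2)
      = t ^ (a-1) * (Real.pi / Real.sin (Real.pi * a)) := by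
  have hb : 0 < Real.sqrt t := Real.sqrt_pos.mpr ht
  have step1 : ∫ ξ : ℝ, |ξ| ^ (2*a-1) / (t + ξ^2)
      = 2 * ∫ x in Ioi (0:ℝ), x ^ (2*a-1) / (t + x^2) := by
    rw [← integral_comp_abs (f := fun x => x ^ (2*a-1) / (t + x^2))]
    congr 1; funext ξ; rw [_root_.sq_abs ξ]
  have step2 := MeasureTheory.integral_comp_mul_left_Ioi
    (fun x => x ^ (2*a-1) / (t + x^2)) 0 hb
  simp only [mul_zero, smul_eq_mul] at step2
  have step3 : ∫ x in Ioi (0:ℝ), (Real.sqrt t * x) ^ (2*a-1) / (t + (Real.sqrt t * x)^2)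
      = (Real.sqrt t ^ (2*a-1) * t⁻¹) * ∫ x in Ioi (0:ℝ), x ^ (2*a-1) / (1 + x^2) := by
    rw [← integral_const_mul]
    refine setIntegral_congr_fun measurableSet_Ioi (fun x hx => ?_)
    have hx0 : (0:ℝ) < x := hx
    have e1 : (Real.sqrt t * x) ^ (2*a-1) = Real.sqrt t ^ (2*a-1) * x ^ (2*a-1) :=
      Real.mul_rpow hb.le hx0.le
    have e2 : t + (Real.sqrt t * x)^2 = t * (1 + x^2) := by
      rw [mul_pow, Real.sq_sqrt ht.le]; ring
    rw [e1, e2]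
    field_simp
  have e4 : Real.sqrt t * (Real.sqrt t ^ (2*a-1) * t⁻¹) = t ^ (a-1) := by
    have h1' : Real.sqrt t ^ (2*a-1) = t ^ (a - 1/2) := by
      rw [Real.sqrt_eq_rpow, ← Real.rpow_mul ht.le]; congr 1; ring
    rw [h1', Real.sqrt_eq_rpow, ← Real.rpow_neg_one t, ← Real.rpow_add ht, ← Real.rpow_add ht]
    congr 1; ring
  calc ∫ ξ : ℝ, |ξ| ^ (2*a-1) / (t + ξ^2)
      = 2 * ∫ x in Ioi (0:ℝ), x ^ (2*a-1) / (t + x^2) := step1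
    _ = 2 * (Real.sqrt t * ((Real.sqrt t ^ (2*a-1) * t⁻¹)
          * ∫ x in Ioi (0:ℝ), x ^ (2*a-1) / (1 + x^2))) := by
        rw [← step3, step2]
        field_simp
    _ = t ^ (a-1) * (Real.pi / Real.sin (Real.pi * a)) := by
        rw [C1 h0 h1, ← e4]
        ring



lemma integrable_comp_abs' {f : ℝ → ℝ} (hf : IntegrableOn f (Ioi 0)) :
    Integrable fun x : ℝ => f |x| := by
  have hIoi : IntegrableOn (fun x : ℝ => f |x|) (Ioi 0) := by
    refine hf.congr_fun (fun x hx => ?_) measurableSet_Ioi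
    rw [abs_of_pos hx]
  have hIic : IntegrableOn (fun x : ℝ => f |x|) (Iic 0) := by
    rw [← Measure.map_neg_eq_self (volume : Measure ℝ)]
    have m : MeasurableEmbedding fun x : ℝ => -x := (Homeomorph.neg ℝ).measurableEmbedding
    rw [m.integrableOn_map_iff]
    simp_rw [Function.comp_def, abs_neg, neg_preimage, neg_Iic, neg_zero]
    exact Iff.mpr integrableOn_Ici_iff_integrableOn_Ioi hIoi
  have := hIic.union hIoi
  rwa [Iic_union_Ioi, integrableOn_univ] at this

lemma integrable_m {a : ℝ} (h0 : 0 < a) (h1 : a < 1) :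
    Integrable (fun x : ℝ => |x| ^ (2*a-1) * (1+x^2)⁻¹) := by
  have hmeas : Measurable (fun x : ℝ => x ^ (2*a-1) * (1+x^2)⁻¹) := by fun_prop
  have h_on : IntegrableOn (fun x : ℝ => x ^ (2*a-1) * (1+x^2)⁻¹) (Ioi 0) := by
    have hsplit : Ioi (0:ℝ) = Ioc 0 1 ∪ Ioi 1 := (Ioc_union_Ioi_eq_Ioi zero_le_one).symm
    rw [hsplit]
    refine IntegrableOn.union ?_ ?_
    · -- on Ioc 0 1, bounded by x ^ (2a-1)
      have hint : IntegrableOn (fun x : ℝ => x ^ (2*a-1)) (Ioc 0 1) := by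
        rw [← intervalIntegrable_iff_integrableOn_Ioc_of_le zero_le_one]
        exact intervalIntegral.intervalIntegrable_rpow' (by linarith)
      refine hint.mono' hmeas.aestronglyMeasurable.restrict ?_
      rw [ae_restrict_iff' measurableSet_Ioc]
      refine Filter.Eventually.of_forall (fun x hx => ?_)
      have hx0 : (0:ℝ) < x := hx.1
      have h1x : (0:ℝ) < 1 + x^2 := by positivity
      rw [Real.norm_eq_abs, _root_.abs_of_nonneg (by positivity)]
      calc x ^ (2*a-1) * (1+x^2)⁻¹ ≤ x ^ (2*a-1) * 1 := by
            gcongr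
            rw [inv_le_one_iff₀]
            right; nlinarith
        _ = x ^ (2*a-1) := mul_one _
    · -- on Ioi 1, bounded by x ^ (2a-3)
      have hint : IntegrableOn (fun x : ℝ => x ^ (2*a-3)) (Ioi 1) :=
        integrableOn_Ioi_rpow_of_lt (by linarith) one_pos
      refine hint.mono' hmeas.aestronglyMeasurable.restrict ?_
      rw [ae_restrict_iff' measurableSet_Ioi]
      refine Filter.Eventually.of_forall (fun x hx => ?_)
      have hx1 : (1:ℝ) < x := hx
      have hx0 : (0:ℝ) < x := by linarith
      rw [Real.norm_eq_abs, _root_.abs_of_nonneg (by positivity)]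
      have e1 : x ^ (2*a-3) = x ^ (2*a-1) * (x^2)⁻¹ := by
        have : (x:ℝ)^2 = x ^ (2:ℝ) := by
          rw [← Real.rpow_natCast x 2]; norm_num
        rw [this, ← Real.rpow_neg hx0.le, ← Real.rpow_add hx0]
        congr 1; ring
      rw [e1]
      have h2 : ((1:ℝ)+x^2)⁻¹ ≤ (x^2)⁻¹ := by
        apply inv_anti₀ (by positivity)
        nlinarith
      exact mul_le_mul_of_nonneg_left h2 (by positivity)
  have heq : (fun x : ℝ => |x| ^ (2*a-1) * (1+x^2)⁻¹)
      = fun x : ℝ => (fun y : ℝ => y ^ (2*a-1) * (1+y^2)⁻¹) |x| := by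
    funext x; simp only [_root_.sq_abs]
  rw [heq]
  exact integrable_comp_abs' h_on



lemma norm_add_ge {z : ℂ} {d R : ℝ} (hd : 0 < d)
    (hdz : ∀ x : ℝ, 0 ≤ x → d ≤ ‖z + (x:ℂ)‖) (hR : ‖z‖ ≤ R) :
    ∀ x : ℝ, 0 ≤ x → min (d/(2+2*R)) (1/2) * (1+x) ≤ ‖z + (x:ℂ)‖ := by
  intro x hx
  have hR0 : (0:ℝ) ≤ R := le_trans (norm_nonneg z) hR
  rcases le_or_gt x (1+2*R) with h|h
  · have h1 : min (d/(2+2*R)) (1/2) * (1+x) ≤ (d/(2+2*R)) * (2+2*R) :=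
      mul_le_mul (min_le_left _ _) (by linarith) (by linarith) (by positivity)
    have h2 : (d/(2+2*R)) * (2+2*R) = d := by field_simp
    linarith [hdz x hx]
  · have hxn : ‖(x:ℂ)‖ = x := by
      rw [Complex.norm_real, Real.norm_eq_abs, _root_.abs_of_nonneg hx]
    have h1 : ‖(x:ℂ)‖ ≤ ‖z + (x:ℂ)‖ + ‖z‖ := by
      have e : (x:ℂ) = (z + (x:ℂ)) + (-z) := by ring
      calc ‖(x:ℂ)‖ = ‖(z + (x:ℂ)) + (-z)‖ := by rw [← e]
        _ ≤ ‖z + (x:ℂ)‖ + ‖-z‖ := norm_add_le _ _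
        _ = ‖z + (x:ℂ)‖ + ‖z‖ := by rw [norm_neg]
    have h2 : min (d/(2+2*R)) (1/2) * (1+x) ≤ (1/2)*(1+x) :=
      mul_le_mul_of_nonneg_right (min_le_right _ _) (by linarith)
    have h3 : x - R ≤ ‖z + (x:ℂ)‖ := by rw [hxn] at h1; linarith
    linarith

lemma denom_bound {z₀ : ℂ} (hz₀ : z₀ ∈ Complex.slitPlane) :
    ∃ c, 0 < c ∧ ∃ ε, 0 < ε ∧
      ∀ z ∈ Metric.ball z₀ ε, ∀ x : ℝ, 0 ≤ x → c * (1+x) ≤ ‖z + (x:ℂ)‖ := by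
  have hSc : IsClosed (Complex.slitPlaneᶜ) := isOpen_slitPlane.isClosed_compl
  have hSne : (Complex.slitPlaneᶜ).Nonempty := by
    refine ⟨-1, ?_⟩
    simp [Complex.mem_slitPlane_iff]
  set d := Metric.infDist z₀ (Complex.slitPlaneᶜ) with hd_def
  have hd : 0 < d := by
    rw [hd_def]
    exact (hSc.notMem_iff_infDist_pos hSne).mp (by simpa using hz₀)
  refine ⟨min ((d/2)/(2+2*(‖z₀‖ + d/2))) (1/2), ?_, d/2, by positivity, ?_⟩
  · have : (0:ℝ) < (d/2)/(2+2*(‖z₀‖ + d/2)) := by positivity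
    exact lt_min this (by norm_num)
  intro z hz x hx
  have hdist : dist z z₀ < d/2 := Metric.mem_ball.mp hz
  have hz_d : ∀ y : ℝ, 0 ≤ y → d/2 ≤ ‖z + (y:ℂ)‖ := by
    intro y hy
    have hmem : (-(y:ℂ)) ∈ Complex.slitPlaneᶜ := by
      simp only [mem_compl_iff, Complex.mem_slitPlane_iff]
      push_neg
      constructor
      · simp [hy]
      · simp
    have h1 : d ≤ Metric.infDist z (Complex.slitPlaneᶜ) + dist z₀ z := by
      rw [hd_def]; exact Metric.infDist_le_infDist_add_dist
    have h2 : Metric.infDist z (Complex.slitPlaneᶜ) ≤ dist z (-(y:ℂ)) :=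
      Metric.infDist_le_dist_of_mem hmem
    have h3 : dist z (-(y:ℂ)) = ‖z + (y:ℂ)‖ := by
      rw [dist_eq_norm]; ring_nf
    rw [dist_comm] at h1
    linarith
  have hzn : ‖z‖ ≤ ‖z₀‖ + d/2 := by
    have : ‖z - z₀‖ < d/2 := by rwa [← dist_eq_norm]
    calc ‖z‖ = ‖z₀ + (z - z₀)‖ := by ring_nf
      _ ≤ ‖z₀‖ + ‖z - z₀‖ := norm_add_le _ _
      _ ≤ ‖z₀‖ + d/2 := by linarith
  exact norm_add_ge (by positivity) hz_d hzn x hx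



noncomputable def Fi (a : ℝ) (z : ℂ) (ξ : ℝ) : ℂ :=
  ((|ξ| ^ (2*a-1) : ℝ) : ℂ) / (z + (ξ:ℂ)^2)

noncomputable def Fi' (a : ℝ) (z : ℂ) (ξ : ℝ) : ℂ :=
  ((|ξ| ^ (2*a-1) : ℝ) : ℂ) * (-1 / (z + (ξ:ℂ)^2)^2)

lemma Fi_meas (a : ℝ) (z : ℂ) : AEStronglyMeasurable (Fi a z) volume := by
  apply Measurable.aestronglyMeasurable
  unfold Fi
  fun_prop

lemma Fi'_meas (a : ℝ) (z : ℂ) : AEStronglyMeasurable (Fi' a z) volume := by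
  apply Measurable.aestronglyMeasurable
  unfold Fi'
  fun_prop

lemma sq_cast (ξ : ℝ) : ((ξ:ℂ))^2 = ((ξ^2 : ℝ) : ℂ) := by push_cast; ring

lemma norm_Fi (a : ℝ) (z : ℂ) (ξ : ℝ) :
    ‖Fi a z ξ‖ = |ξ| ^ (2*a-1) / ‖z + (ξ:ℂ)^2‖ := by
  rw [Fi, norm_div, Complex.norm_real, Real.norm_eq_abs,
    _root_.abs_of_nonneg (Real.rpow_nonneg (abs_nonneg ξ) _)]

lemma norm_Fi' (a : ℝ) (z : ℂ) (ξ : ℝ) :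
    ‖Fi' a z ξ‖ = |ξ| ^ (2*a-1) / ‖z + (ξ:ℂ)^2‖^2 := by
  rw [Fi', norm_mul, Complex.norm_real, Real.norm_eq_abs,
    _root_.abs_of_nonneg (Real.rpow_nonneg (abs_nonneg ξ) _), norm_div, norm_neg, norm_one,
    norm_pow]
  ring

lemma integrable_Fi {a : ℝ} (h0 : 0 < a) (h1 : a < 1) {c : ℝ} (hc : 0 < c) {z : ℂ}
    (hz : ∀ x : ℝ, 0 ≤ x → c * (1+x) ≤ ‖z + (x:ℂ)‖) :
    Integrable (Fi a z) := by
  refine Integrable.mono' (((integrable_m h0 h1).const_mul c⁻¹)) (Fi_meas a z)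
    (Filter.Eventually.of_forall (fun ξ => ?_))
  have hb : c * (1+ξ^2) ≤ ‖z + (ξ:ℂ)^2‖ := by
    rw [sq_cast]; exact hz (ξ^2) (sq_nonneg ξ)
  have hpos : (0:ℝ) < c * (1+ξ^2) := by positivity
  rw [norm_Fi]
  calc |ξ| ^ (2*a-1) / ‖z + (ξ:ℂ)^2‖ ≤ |ξ| ^ (2*a-1) / (c * (1+ξ^2)) := by
        apply div_le_div_of_nonneg_left (Real.rpow_nonneg (abs_nonneg ξ) _) hpos hb
    _ = c⁻¹ * (|ξ| ^ (2*a-1) * (1+ξ^2)⁻¹) := by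
        rw [div_eq_mul_inv, mul_inv]; ring

lemma hasDerivAt_Fi {a : ℝ} {ξ : ℝ} {z : ℂ} (hne : z + (ξ:ℂ)^2 ≠ 0) :
    HasDerivAt (fun w => Fi a w ξ) (Fi' a z ξ) z := by
  have h := (((hasDerivAt_id z).add_const ((ξ:ℂ)^2)).inv hne).const_mul
    ((|ξ| ^ (2*a-1) : ℝ) : ℂ)
  simp only [Fi, Fi', div_eq_mul_inv]
  exact h.congr_deriv (by simp [id, div_eq_mul_inv])

lemma F_differentiableAt {a : ℝ} (h0 : 0 < a) (h1 : a < 1) {z₀ : ℂ}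
    (hz₀ : z₀ ∈ Complex.slitPlane) :
    DifferentiableAt ℂ (fun z => ∫ ξ : ℝ, Fi a z ξ) z₀ := by
  obtain ⟨c, hc, ε, hε, hball⟩ := denom_bound hz₀
  have hb0 : ∀ z ∈ Metric.ball z₀ ε, ∀ ξ : ℝ, c * (1+ξ^2) ≤ ‖z + (ξ:ℂ)^2‖ := by
    intro z hz ξ
    rw [sq_cast]
    exact hball z hz (ξ^2) (sq_nonneg ξ)
  have hne : ∀ z ∈ Metric.ball z₀ ε, ∀ ξ : ℝ, z + (ξ:ℂ)^2 ≠ 0 := by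
    intro z hz ξ h
    have := hb0 z hz ξ
    rw [h, norm_zero] at this
    nlinarith [sq_nonneg ξ]
  have hmem : z₀ ∈ Metric.ball z₀ ε := Metric.mem_ball_self hε
  have key := hasDerivAt_integral_of_dominated_loc_of_deriv_le (μ := volume)
    (F := fun z ξ => Fi a z ξ) (F' := fun z ξ => Fi' a z ξ)
    (bound := fun ξ => (c^2)⁻¹ * (|ξ| ^ (2*a-1) * (1+ξ^2)⁻¹)) (Metric.ball_mem_nhds z₀ hε)
    (Filter.Eventually.of_forall (fun z => Fi_meas a z))
    (integrable_Fi h0 h1 hc (hball z₀ hmem))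
    (Fi'_meas a z₀)
    (Filter.Eventually.of_forall (fun ξ => ?_))
    (((integrable_m h0 h1).const_mul _))
    (Filter.Eventually.of_forall (fun ξ => ?_))
  · exact key.2.differentiableAt
  · -- bound on F'
    intro z hz
    have hb := hb0 z hz ξ
    have hpos : (0:ℝ) < c * (1+ξ^2) := by positivity
    rw [norm_Fi']
    calc |ξ| ^ (2*a-1) / ‖z + (ξ:ℂ)^2‖^2 ≤ |ξ| ^ (2*a-1) / (c * (1+ξ^2))^2 := by
          apply div_le_div_of_nonneg_left (Real.rpow_nonneg (abs_nonneg ξ) _) (by positivity)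
          apply pow_le_pow_left₀ hpos.le hb
      _ ≤ (c^2)⁻¹ * (|ξ| ^ (2*a-1) * (1+ξ^2)⁻¹) := by
          rw [mul_pow, div_eq_mul_inv, mul_inv]
          have h1 : ((1+ξ^2)^2)⁻¹ ≤ (1+ξ^2)⁻¹ := by
            apply inv_anti₀ (by positivity)
            nlinarith [sq_nonneg ξ]
          calc |ξ| ^ (2*a-1) * ((c^2)⁻¹ * ((1+ξ^2)^2)⁻¹)
              ≤ |ξ| ^ (2*a-1) * ((c^2)⁻¹ * (1+ξ^2)⁻¹) := by
                apply mul_le_mul_of_nonneg_left _ (Real.rpow_nonneg (abs_nonneg ξ) _)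
                exact mul_le_mul_of_nonneg_left h1 (by positivity)
            _ = (c^2)⁻¹ * (|ξ| ^ (2*a-1) * (1+ξ^2)⁻¹) := by ring
  · -- differentiability
    intro z hz
    exact hasDerivAt_Fi (hne z hz ξ)




noncomputable def G (a : ℝ) (z : ℂ) : ℂ :=
  ((Real.pi : ℂ) / (Real.sin (a * Real.pi) : ℂ)) * z ^ ((a:ℂ) - 1)

lemma F_real {a t : ℝ} (h0 : 0 < a) (h1 : a < 1) (ht : 0 < t) :
    ∫ ξ : ℝ, Fi a (t:ℂ) ξ = G a (t:ℂ) := by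
  have step1 : ∫ ξ : ℝ, Fi a (t:ℂ) ξ = ((∫ ξ : ℝ, |ξ| ^ (2*a-1) / (t + ξ^2) : ℝ) : ℂ) := by
    calc ∫ ξ : ℝ, Fi a (t:ℂ) ξ = ∫ ξ : ℝ, ((|ξ| ^ (2*a-1) / (t + ξ^2) : ℝ) : ℂ) := by
          congr 1; funext ξ
          rw [Fi, Complex.ofReal_div]
          push_cast
          ring
      _ = _ := integral_ofReal
  rw [step1, D_eval h0 h1 ht, G]
  have hcpow : ((t:ℂ)) ^ ((a:ℂ) - 1) = ((t ^ (a-1) : ℝ) : ℂ) := by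
    rw [Complex.ofReal_cpow ht.le]
    push_cast
    ring_nf
  rw [hcpow]
  rw [show Real.sin (a * Real.pi) = Real.sin (Real.pi * a) from by rw [mul_comm]]
  push_cast
  ring

lemma slitPlane_preconnected : IsPreconnected Complex.slitPlane := by
  have hpath : IsPathConnected Complex.slitPlane := by
    refine isPathConnected_iff.mpr ⟨⟨1, Complex.one_mem_slitPlane⟩, fun x hx y hy => ?_⟩
    have h1 : JoinedIn Complex.slitPlane 1 x :=
      JoinedIn.of_segment_subset (Complex.starConvex_one_slitPlane.segment_subset hx)
    have h2 : JoinedIn Complex.slitPlane 1 y :=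
      JoinedIn.of_segment_subset (Complex.starConvex_one_slitPlane.segment_subset hy)
    exact h1.symm.trans h2
  exact hpath.isConnected.isPreconnected

lemma F_eq_G {a : ℝ} (h0 : 0 < a) (h1 : a < 1) :
    EqOn (fun z => ∫ ξ : ℝ, Fi a z ξ) (G a) Complex.slitPlane := by
  have hFan : AnalyticOnNhd ℂ (fun z => ∫ ξ : ℝ, Fi a z ξ) Complex.slitPlane := by
    apply DifferentiableOn.analyticOnNhd _ Complex.isOpen_slitPlane
    exact fun z hz => (F_differentiableAt h0 h1 hz).differentiableWithinAt
  have hGan : AnalyticOnNhd ℂ (G a) Complex.slitPlane := by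
    apply DifferentiableOn.analyticOnNhd _ Complex.isOpen_slitPlane
    intro z hz
    apply DifferentiableAt.differentiableWithinAt
    exact (differentiableAt_id.cpow (differentiableAt_const _) hz).const_mul _
  have hfreq : ∃ᶠ z in nhdsWithin (1:ℂ) {(1:ℂ)}ᶜ, (fun z => ∫ ξ : ℝ, Fi a z ξ) z = G a z := by
    have htend : Filter.Tendsto (fun n : ℕ => ((1 + ((n:ℝ)+1)⁻¹ : ℝ) : ℂ)) Filter.atTop
        (nhdsWithin (1:ℂ) {(1:ℂ)}ᶜ) := by
      apply tendsto_nhdsWithin_of_tendsto_nhds_of_eventually_within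
      · have hr : Filter.Tendsto (fun n : ℕ => (1 + ((n:ℝ)+1)⁻¹ : ℝ)) Filter.atTop (nhds 1) := by
          have := tendsto_one_div_add_atTop_nhds_zero_nat (𝕜 := ℝ)
          simp only [one_div] at this
          simpa using tendsto_const_nhds.add this
        have h2 := (Complex.continuous_ofReal.tendsto 1).comp hr
        simp only [Function.comp_def] at h2
        convert h2 using 2 <;> push_cast <;> ring
      · refine Filter.Eventually.of_forall (fun n => ?_)
        simp only [mem_compl_iff, mem_singleton_iff]
        intro h
        have h' : (1 + ((n:ℝ)+1)⁻¹ : ℝ) = 1 := by exact_mod_cast h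
        have : ((n:ℝ)+1)⁻¹ > 0 := by positivity
        linarith
    apply htend.frequently
    apply Filter.Frequently.of_forall
    intro n
    exact F_real h0 h1 (by positivity)
  exact hFan.eqOn_of_preconnected_of_frequently_eq hGan slitPlane_preconnected
    Complex.one_mem_slitPlane hfreq

end Stmt2Aux

open MeasureTheory Complex

/-- For `0 < α̃ < 1`, `η ≥ 0` and `λ ∈ ℂ \ (-∞, -η]`,
`∫_ℝ |ξ|^{2α̃-1} / (λ + η + ξ²) dξ = (π / sin(α̃π)) (λ+η)^{α̃-1}`
(principal branch of the complex power). -/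
theorem stmt2 (αt η : ℝ) (hαt0 : 0 < αt) (hαt1 : αt < 1) (hη : 0 ≤ η)
    (lam : ℂ) (hlam : ¬ (lam.im = 0 ∧ lam.re ≤ -η)) :
    ∫ ξ : ℝ, ((|ξ| ^ (2 * αt - 1) : ℝ) : ℂ) / (lam + (η : ℂ) + (ξ : ℂ) ^ 2)
      = ((Real.pi : ℂ) / (Real.sin (αt * Real.pi) : ℂ)) *
          (lam + (η : ℂ)) ^ ((αt : ℂ) - 1) := by
  have hz : lam + (η : ℂ) ∈ Complex.slitPlane := by
    rw [Complex.mem_slitPlane_iff]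
    by_cases him : lam.im = 0
    · left
      push_neg at hlam
      have hre := hlam him
      simp only [Complex.add_re, Complex.ofReal_re]
      linarith
    · right
      simp only [Complex.add_im, Complex.ofReal_im, add_zero]
      exact him
  have key := Stmt2Aux.F_eq_G hαt0 hαt1 hz
  simpa [Stmt2Aux.Fi, Stmt2Aux.G, add_assoc] using key
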